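/- Define $\theta:\mathbb{R}\to\mathbb{R}$ by $\theta(x) = \arctan x$ for $x < 0$ and $\theta(x) = x$ for $x \ge 0$, and let $V(x) = (\cos\theta(x), -\sin\theta(x))$. Then $V$ is twice continuously differentiable on $\mathbb{R}$, its third derivative exists and is bounded on $\mathbb{R}\setminus\{0\}$, but $V'''$ does not extend continuously to $x = 0$: the one-sided limits of $\theta'''$ at $0$ are $-2$ (from the left) and $0$ (from the right). -/

import Mathlib

open Real Filter Set

noncomputable def f1 (x : ℝ) : ℝ := (1 + x^2)⁻¹
noncomputable def f2 (x : ℝ) : ℝ := -2*x / (1+x^2)^2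
noncomputable def f3 (x : ℝ) : ℝ := (6*x^2 - 2) / (1+x^2)^3

lemma one_add_sq_ne (x : ℝ) : 1 + x^2 ≠ 0 := by positivity
lemma one_add_sq_pos (x : ℝ) : 0 < 1 + x^2 := by positivity

lemma hasDerivAt_f1 (x : ℝ) : HasDerivAt f1 (f2 x) x := by
  have h : HasDerivAt (fun x : ℝ => 1 + x^2) (2*x) x := by
    simpa using (hasDerivAt_pow 2 x).const_add 1
  have := h.inv (one_add_sq_ne x)
  refine this.congr_deriv ?_
  unfold f2
  field_simp

lemma hasDerivAt_f2 (x : ℝ) : HasDerivAt f2 (f3 x) x := by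
  have hnum : HasDerivAt (fun x : ℝ => -2*x) (-2) x := by
    simpa using (hasDerivAt_id x).const_mul (-2 : ℝ)
  have hden : HasDerivAt (fun x : ℝ => (1+x^2)^2) (2*(1+x^2)*(2*x)) x := by
    have h : HasDerivAt (fun x : ℝ => 1 + x^2) (2*x) x := by
      simpa using (hasDerivAt_pow 2 x).const_add 1
    simpa [pow_one, Function.comp_def] using (hasDerivAt_pow 2 (1+x^2)).comp x h
  have := hnum.div hden (pow_ne_zero 2 (one_add_sq_ne x))
  refine this.congr_deriv ?_
  unfold f3
  field_simp
  ring

lemma arctan_hasDerivAt_f1 (x : ℝ) : HasDerivAt arctan (f1 x) x := by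
  simpa [f1, one_div] using Real.hasDerivAt_arctan x

lemma f1_bound (x : ℝ) : |f1 x| ≤ 1 := by
  rw [abs_of_pos (by unfold f1; positivity)]
  rw [f1, inv_le_one_iff₀]
  right; nlinarith [sq_nonneg x]

lemma f2_bound (x : ℝ) : |f2 x| ≤ 2 := by
  have h : |f2 x| = 2*|x|/(1+x^2)^2 := by
    rw [f2, abs_div]
    congr 1
    · rw [abs_mul]; norm_num
    · exact abs_of_pos (by positivity)
  rw [h, div_le_iff₀ (by positivity)]
  nlinarith [sq_nonneg (|x|-1), abs_nonneg x, sq_abs x, one_add_sq_pos x, sq_nonneg (1+x^2)]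

lemma f3_bound (x : ℝ) : |f3 x| ≤ 6 := by
  have h : |f3 x| = |6*x^2-2|/(1+x^2)^3 := by
    rw [f3, abs_div]
    congr 1
    exact abs_of_pos (by positivity)
  rw [h, div_le_iff₀ (by positivity)]
  have h1 : |6*x^2 - 2| ≤ 6*x^2 + 2 := by
    have := abs_sub (6*x^2) (2:ℝ)
    have h2 : |6*x^2| = 6*x^2 := abs_of_nonneg (by positivity)
    calc |6*x^2-2| ≤ |6*x^2| + |(2:ℝ)| := abs_sub _ _
    _ = 6*x^2 + 2 := by rw [h2]; norm_num
  nlinarith [sq_nonneg x, sq_nonneg (x^2), sq_nonneg (x^3), one_add_sq_pos x]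

noncomputable def c0 (t : ℝ) : ℝ × ℝ := (Real.cos t, -Real.sin t)
noncomputable def c1 (t : ℝ) : ℝ × ℝ := (-Real.sin t, -Real.cos t)
noncomputable def c2 (t : ℝ) : ℝ × ℝ := (-Real.cos t, Real.sin t)
noncomputable def c3 (t : ℝ) : ℝ × ℝ := (Real.sin t, Real.cos t)

lemma hasDerivAt_c0 (t : ℝ) : HasDerivAt c0 (c1 t) t :=
  (Real.hasDerivAt_cos t).prodMk (Real.hasDerivAt_sin t).neg
lemma hasDerivAt_c1 (t : ℝ) : HasDerivAt c1 (c2 t) t := by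
  have := (Real.hasDerivAt_sin t).neg.prodMk (Real.hasDerivAt_cos t).neg
  unfold c1; simpa [c2] using this
lemma hasDerivAt_c2 (t : ℝ) : HasDerivAt c2 (c3 t) t := by
  have := (Real.hasDerivAt_cos t).neg.prodMk (Real.hasDerivAt_sin t)
  unfold c2; simpa [c3] using this

lemma norm_c1 (t : ℝ) : ‖c1 t‖ ≤ 1 := by
  rw [c1, Prod.norm_def]
  simp only [norm_neg, Real.norm_eq_abs]
  exact max_le (abs_sin_le_one t) (abs_cos_le_one t)
lemma norm_c2 (t : ℝ) : ‖c2 t‖ ≤ 1 := by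
  rw [c2, Prod.norm_def]
  simp only [norm_neg, Real.norm_eq_abs]
  exact max_le (abs_cos_le_one t) (abs_sin_le_one t)
lemma norm_c3 (t : ℝ) : ‖c3 t‖ ≤ 1 := by
  rw [c3, Prod.norm_def]
  simp only [Real.norm_eq_abs]
  exact max_le (abs_sin_le_one t) (abs_cos_le_one t)

section key
variable (φ φ1 φ2 φ3 : ℝ → ℝ)
  (h1 : ∀ x, HasDerivAt φ (φ1 x) x) (h2 : ∀ x, HasDerivAt φ1 (φ2 x) x)
  (h3 : ∀ x, HasDerivAt φ2 (φ3 x) x)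

noncomputable def W1 (x : ℝ) : ℝ × ℝ := φ1 x • c1 (φ x)
noncomputable def W2 (x : ℝ) : ℝ × ℝ := φ2 x • c1 (φ x) + (φ1 x)^2 • c2 (φ x)
noncomputable def W3 (x : ℝ) : ℝ × ℝ :=
  φ3 x • c1 (φ x) + (3 * (φ1 x * φ2 x)) • c2 (φ x) + (φ1 x)^3 • c3 (φ x)

include h1 in
lemma hasDerivAt_W0 (x : ℝ) : HasDerivAt (fun y => c0 (φ y)) (W1 φ φ1 x) x := by
  have := HasDerivAt.scomp x (hasDerivAt_c0 (φ x)) (h1 x)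
  simpa [W1, Function.comp_def] using this

include h1 h2 in
lemma hasDerivAt_W1 (x : ℝ) : HasDerivAt (W1 φ φ1) (W2 φ φ1 φ2 x) x := by
  have hc : HasDerivAt (fun y => c1 (φ y)) (φ1 x • c2 (φ x)) x := by
    have := HasDerivAt.scomp x (hasDerivAt_c1 (φ x)) (h1 x)
    simpa [Function.comp_def] using this
  have h := (h2 x).smul hc
  have e : W2 φ φ1 φ2 x = φ1 x • (φ1 x • c2 (φ x)) + φ2 x • c1 (φ x) := by
    unfold W2; rw [smul_smul, ← sq]; abel
  rw [e]; exact h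

include h1 h2 h3 in
lemma hasDerivAt_W2 (x : ℝ) : HasDerivAt (W2 φ φ1 φ2) (W3 φ φ1 φ2 φ3 x) x := by
  have hc1 : HasDerivAt (fun y => c1 (φ y)) (φ1 x • c2 (φ x)) x := by
    simpa [Function.comp_def] using HasDerivAt.scomp x (hasDerivAt_c1 (φ x)) (h1 x)
  have hc2 : HasDerivAt (fun y => c2 (φ y)) (φ1 x • c3 (φ x)) x := by
    simpa [Function.comp_def] using HasDerivAt.scomp x (hasDerivAt_c2 (φ x)) (h1 x)
  have hsq : HasDerivAt (fun y => (φ1 y)^2) (2 * φ1 x * φ2 x) x := by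
    have := (hasDerivAt_pow 2 (φ1 x)).comp x (h2 x)
    simpa [pow_one, Function.comp_def] using this
  have hA := (h3 x).smul hc1
  have hB := hsq.smul hc2
  have h := hA.add hB
  have e : W3 φ φ1 φ2 φ3 x =
      (φ2 x • (φ1 x • c2 (φ x)) + φ3 x • c1 (φ x)) +
      ((φ1 x)^2 • (φ1 x • c3 (φ x)) + (2 * φ1 x * φ2 x) • c2 (φ x)) := by
    unfold W3; module
  rw [e]; exact h

lemma norm_W3_le (x : ℝ) (b1 : |φ1 x| ≤ 1) (b2 : |φ2 x| ≤ 2) (b3 : |φ3 x| ≤ 6) :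
    ‖W3 φ φ1 φ2 φ3 x‖ ≤ 13 := by
  rw [W3]
  calc ‖φ3 x • c1 (φ x) + (3 * (φ1 x * φ2 x)) • c2 (φ x) + (φ1 x)^3 • c3 (φ x)‖
      ≤ ‖φ3 x • c1 (φ x) + (3 * (φ1 x * φ2 x)) • c2 (φ x)‖ + ‖(φ1 x)^3 • c3 (φ x)‖ :=
        norm_add_le _ _
    _ ≤ (‖φ3 x • c1 (φ x)‖ + ‖(3 * (φ1 x * φ2 x)) • c2 (φ x)‖) + ‖(φ1 x)^3 • c3 (φ x)‖ := by
        gcongr; exact norm_add_le _ _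
    _ ≤ (6 * 1 + (3 * (1 * 2)) * 1) + 1^3 * 1 := by
        gcongr ?_ + ?_ + ?_ <;> rw [norm_smul, Real.norm_eq_abs]
        · exact mul_le_mul b3 (norm_c1 _) (norm_nonneg _) (by norm_num)
        · refine mul_le_mul ?_ (norm_c2 _) (norm_nonneg _) (by norm_num)
          rw [abs_mul, abs_mul]
          gcongr <;> simp [b1, b2, abs_of_nonneg]
        · refine mul_le_mul ?_ (norm_c3 _) (norm_nonneg _) (by norm_num)
          rw [abs_pow, one_pow]
          exact pow_le_one₀ (abs_nonneg _) b1
    _ ≤ 13 := by norm_num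
end key

lemma third_deriv_eq_on {F : Type*} [NormedAddCommGroup F] [NormedSpace ℝ F]
    (f g g1 g2 g3 : ℝ → F)
    (hg1 : ∀ x, HasDerivAt g (g1 x) x) (hg2 : ∀ x, HasDerivAt g1 (g2 x) x)
    (hg3 : ∀ x, HasDerivAt g2 (g3 x) x)
    (s : Set ℝ) (hs : IsOpen s) (hfg : ∀ y ∈ s, f y = g y) :
    ∀ y ∈ s, DifferentiableAt ℝ (deriv (deriv f)) y ∧
      deriv (deriv (deriv f)) y = g3 y := by
  have E : ∀ y ∈ s, f =ᶠ[nhds y] g := fun y hy =>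
    eventually_of_mem (hs.mem_nhds hy) hfg
  have d1 : ∀ y ∈ s, deriv f y = g1 y := fun y hy =>
    (E y hy).deriv_eq.trans (hg1 y).deriv
  have E1 : ∀ y ∈ s, deriv f =ᶠ[nhds y] g1 := fun y hy =>
    eventually_of_mem (hs.mem_nhds hy) d1
  have d2 : ∀ y ∈ s, deriv (deriv f) y = g2 y := fun y hy =>
    (E1 y hy).deriv_eq.trans (hg2 y).deriv
  have E2 : ∀ y ∈ s, deriv (deriv f) =ᶠ[nhds y] g2 := fun y hy =>
    eventually_of_mem (hs.mem_nhds hy) d2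
  intro y hy
  constructor
  · exact (E2 y hy).differentiableAt_iff.mpr (hg3 y).differentiableAt
  · exact (E2 y hy).deriv_eq.trans (hg3 y).deriv

theorem stmt2 (θ : ℝ → ℝ) (V : ℝ → ℝ × ℝ)
    (hθ : ∀ x : ℝ, θ x = if x < 0 then Real.arctan x else x)
    (hV : ∀ x : ℝ, V x = (Real.cos (θ x), -Real.sin (θ x))) :
    ContDiff ℝ 2 V ∧
    (∃ C : ℝ, ∀ x : ℝ, x ≠ 0 → DifferentiableAt ℝ (deriv (deriv V)) x ∧
        ‖deriv (deriv (deriv V)) x‖ ≤ C) ∧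
    Filter.Tendsto (fun x => deriv (deriv (deriv θ)) x)
      (nhdsWithin 0 (Set.Iio 0)) (nhds (-2)) ∧
    Filter.Tendsto (fun x => deriv (deriv (deriv θ)) x)
      (nhdsWithin 0 (Set.Ioi 0)) (nhds 0) := by
  -- basic facts about θ on each side
  have hneg : ∀ y ∈ Iio (0:ℝ), θ y = arctan y := fun y hy => by
    rw [hθ]; exact if_pos hy
  have hpos : ∀ y ∈ Ioi (0:ℝ), θ y = y := fun y hy => by
    rw [hθ]; exact if_neg (not_lt.2 (le_of_lt hy))
  have hzero : θ 0 = 0 := by rw [hθ]; norm_num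
  -- the piecewise derivatives of θ
  set θ1 : ℝ → ℝ := fun x => if x < 0 then f1 x else 1 with hθ1def
  set θ2 : ℝ → ℝ := fun x => if x < 0 then f2 x else 0 with hθ2def
  have f1zero : f1 0 = 1 := by simp [f1]
  have f2zero : f2 0 = 0 := by simp [f2]
  have hd1 : ∀ x, HasDerivAt θ (θ1 x) x := by
    intro x
    rcases lt_trichotomy x 0 with hx | hx | hx
    · have hev : θ =ᶠ[nhds x] arctan := eventually_of_mem (isOpen_Iio.mem_nhds hx) hneg
      have := (arctan_hasDerivAt_f1 x).congr_of_eventuallyEq hev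
      simpa [hθ1def, if_pos hx] using this
    · subst hx
      have hIic : HasDerivWithinAt θ 1 (Iic 0) 0 := by
        have h := ((arctan_hasDerivAt_f1 0).hasDerivWithinAt (s := Iic 0))
        rw [f1zero] at h
        refine h.congr ?_ (by rw [hzero, Real.arctan_zero])
        intro y hy
        rcases lt_or_eq_of_le (mem_Iic.1 hy) with h' | h'
        · exact hneg y h'
        · rw [h', hzero, Real.arctan_zero]
      have hIci : HasDerivWithinAt θ 1 (Ici 0) 0 := by
        have h := ((hasDerivAt_id (0:ℝ)).hasDerivWithinAt (s := Ici 0))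
        refine h.congr ?_ (by rw [hzero]; simp)
        intro y hy
        rcases lt_or_eq_of_le (mem_Ici.1 hy) with h' | h'
        · exact hpos y h'
        · rw [← h', hzero]; simp
      have := hIic.union hIci
      rw [Iic_union_Ici] at this
      have h := this.hasDerivAt (by simp)
      simpa [hθ1def] using h
    · have hev : θ =ᶠ[nhds x] (fun y => y) := eventually_of_mem (isOpen_Ioi.mem_nhds hx) hpos
      have := (hasDerivAt_id x).congr_of_eventuallyEq hev
      simpa [hθ1def, if_neg (not_lt.2 (le_of_lt hx))] using this
  have hd2 : ∀ x, HasDerivAt θ1 (θ2 x) x := by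
    intro x
    rcases lt_trichotomy x 0 with hx | hx | hx
    · have hev : θ1 =ᶠ[nhds x] f1 := by
        refine eventually_of_mem (isOpen_Iio.mem_nhds hx) (fun y hy => ?_)
        simp [hθ1def, if_pos (mem_Iio.1 hy)]
      have := (hasDerivAt_f1 x).congr_of_eventuallyEq hev
      simpa [hθ2def, if_pos hx] using this
    · subst hx
      have hIic : HasDerivWithinAt θ1 0 (Iic 0) 0 := by
        have h := ((hasDerivAt_f1 0).hasDerivWithinAt (s := Iic 0))
        rw [f2zero] at h
        refine h.congr ?_ (by simp [hθ1def, f1zero])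
        intro y hy
        rcases lt_or_eq_of_le (mem_Iic.1 hy) with h' | h'
        · simp [hθ1def, if_pos h']
        · rw [h']; simp [hθ1def, f1zero]
      have hIci : HasDerivWithinAt θ1 0 (Ici 0) 0 := by
        have h := ((hasDerivWithinAt_const (0:ℝ) (Ici 0) (1:ℝ)))
        refine (h.congr ?_ (by simp [hθ1def])).congr_deriv rfl
        intro y hy
        simp [hθ1def, if_neg (not_lt.2 (mem_Ici.1 hy))]
      have := hIic.union hIci
      rw [Iic_union_Ici] at this
      have h := this.hasDerivAt (by simp)
      simpa [hθ2def] using h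
    · have hev : θ1 =ᶠ[nhds x] (fun _ => (1:ℝ)) := by
        refine eventually_of_mem (isOpen_Ioi.mem_nhds hx) (fun y hy => ?_)
        simp [hθ1def, if_neg (not_lt.2 (le_of_lt (mem_Ioi.1 hy)))]
      have := (hasDerivAt_const x (1:ℝ)).congr_of_eventuallyEq hev
      simpa [hθ2def, if_neg (not_lt.2 (le_of_lt hx))] using this
  have hderivθ : deriv θ = θ1 := funext fun x => (hd1 x).deriv
  have hderivθ1 : deriv θ1 = θ2 := funext fun x => (hd2 x).deriv
  have hcontf2 : Continuous f2 := by
    apply Continuous.div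
    · continuity
    · continuity
    · exact fun x => pow_ne_zero _ (one_add_sq_ne x)
  have hcontθ2 : Continuous θ2 := by
    have : θ2 = fun x => f2 (min x 0) := by
      funext y
      by_cases hy : y < 0
      · simp [hθ2def, if_pos hy, min_eq_left (le_of_lt hy)]
      · simp [hθ2def, if_neg hy, min_eq_right (not_lt.1 hy), f2zero]
    rw [this]
    exact hcontf2.comp (continuous_id.min continuous_const)
  -- C² of θ and of V
  have hθC2 : ContDiff ℝ 2 θ := by
    rw [show (2 : WithTop ℕ∞) = 1 + 1 from rfl, contDiff_succ_iff_deriv]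
    refine ⟨fun x => (hd1 x).differentiableAt, by simp, ?_⟩
    rw [hderivθ, contDiff_one_iff_deriv, hderivθ1]
    exact ⟨fun x => (hd2 x).differentiableAt, hcontθ2⟩
  have hVC2 : ContDiff ℝ 2 V := by
    have hc : ContDiff ℝ 2 (fun t : ℝ => (Real.cos t, -Real.sin t)) :=
      (Real.contDiff_cos.prodMk Real.contDiff_sin.neg).of_le le_top
    have : V = (fun t : ℝ => (Real.cos t, -Real.sin t)) ∘ θ := funext hV
    rw [this]
    exact hc.comp hθC2
  refine ⟨hVC2, ?_, ?_, ?_⟩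
  · -- bounded third derivative of V away from 0
    refine ⟨13, fun x hx => ?_⟩
    rcases hx.lt_or_gt with hx | hx
    · have hVs : ∀ y ∈ Iio (0:ℝ), V y = (fun y => c0 (arctan y)) y := fun y hy => by
        rw [hV y, hneg y hy]; rfl
      have key := third_deriv_eq_on V (fun y => c0 (arctan y))
        (W1 arctan f1) (W2 arctan f1 f2) (W3 arctan f1 f2 f3)
        (hasDerivAt_W0 arctan f1 arctan_hasDerivAt_f1)
        (hasDerivAt_W1 arctan f1 f2 arctan_hasDerivAt_f1 hasDerivAt_f1)
        (hasDerivAt_W2 arctan f1 f2 f3 arctan_hasDerivAt_f1 hasDerivAt_f1 hasDerivAt_f2)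
        (Iio 0) isOpen_Iio hVs x hx
      refine ⟨key.1, ?_⟩
      rw [key.2]
      exact norm_W3_le arctan f1 f2 f3 x (f1_bound x) (f2_bound x) (f3_bound x)
    · have hVs : ∀ y ∈ Ioi (0:ℝ), V y = (fun y => c0 ((fun z : ℝ => z) y)) y := fun y hy => by
        rw [hV y, hpos y hy]; rfl
      have hid1 : ∀ x : ℝ, HasDerivAt (fun z : ℝ => z) ((fun _ : ℝ => (1:ℝ)) x) x :=
        fun x => hasDerivAt_id x
      have hid2 : ∀ x : ℝ, HasDerivAt (fun _ : ℝ => (1:ℝ)) ((fun _ : ℝ => (0:ℝ)) x) x :=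
        fun x => hasDerivAt_const x 1
      have hid3 : ∀ x : ℝ, HasDerivAt (fun _ : ℝ => (0:ℝ)) ((fun _ : ℝ => (0:ℝ)) x) x :=
        fun x => hasDerivAt_const x 0
      have key := third_deriv_eq_on V (fun y => c0 y)
        (W1 (fun z : ℝ => z) (fun _ => 1)) (W2 (fun z : ℝ => z) (fun _ => 1) (fun _ => 0))
        (W3 (fun z : ℝ => z) (fun _ => 1) (fun _ => 0) (fun _ => 0))
        (hasDerivAt_W0 _ _ hid1)
        (hasDerivAt_W1 _ _ _ hid1 hid2)
        (hasDerivAt_W2 _ _ _ _ hid1 hid2 hid3)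
        (Ioi 0) isOpen_Ioi hVs x hx
      refine ⟨key.1, ?_⟩
      rw [key.2]
      exact norm_W3_le _ _ _ _ x (by norm_num) (by norm_num) (by norm_num)
  · -- left limit of θ''' is -2
    have key := third_deriv_eq_on θ arctan f1 f2 f3
      arctan_hasDerivAt_f1 hasDerivAt_f1 hasDerivAt_f2 (Iio 0) isOpen_Iio hneg
    have hf3cont : ContinuousAt f3 0 := by
      apply ContinuousAt.div
      · fun_prop
      · fun_prop
      · exact pow_ne_zero _ (one_add_sq_ne 0)
    have hf3zero : f3 0 = -2 := by norm_num [f3]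
    have ht : Tendsto f3 (nhdsWithin 0 (Iio 0)) (nhds (-2)) := by
      rw [← hf3zero]
      exact hf3cont.continuousWithinAt.tendsto
    refine ht.congr' ?_
    filter_upwards [self_mem_nhdsWithin] with y hy
    exact ((key y hy).2).symm
  · -- right limit of θ''' is 0
    have hid1 : ∀ x : ℝ, HasDerivAt (fun z : ℝ => z) ((fun _ : ℝ => (1:ℝ)) x) x :=
      fun x => hasDerivAt_id x
    have hid2 : ∀ x : ℝ, HasDerivAt (fun _ : ℝ => (1:ℝ)) ((fun _ : ℝ => (0:ℝ)) x) x :=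
      fun x => hasDerivAt_const x 1
    have hid3 : ∀ x : ℝ, HasDerivAt (fun _ : ℝ => (0:ℝ)) ((fun _ : ℝ => (0:ℝ)) x) x :=
      fun x => hasDerivAt_const x 0
    have key := third_deriv_eq_on θ (fun z : ℝ => z) (fun _ => 1) (fun _ => 0) (fun _ => 0)
      hid1 hid2 hid3 (Ioi 0) isOpen_Ioi hpos
    have ht : Tendsto (fun _ : ℝ => (0:ℝ)) (nhdsWithin 0 (Ioi 0)) (nhds 0) :=
      tendsto_const_nhds
    refine ht.congr' ?_
    filter_upwards [self_mem_nhdsWithin] with y hy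
    exact ((key y hy).2).symm
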